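/- arXiv:2011.11959 — 5 statements merged into one kernel-verified Lean document; each statement's English description precedes it below -/
import Mathlib

section
/- If the robust min-max monitor raises a warning on an input v_op (i.e., there exists an index j with h (f v_op) j < L j or h (f v_op) j > U j), then there does not exist a training input v ∈ D such that |f v_op i − f v i| ≤ Δ for every index i. -/
/-- Soundness/robustness of the robust min-max monitor: a warning implies no
training input is Δ-close (at the perturbation layer) to the operational input. -/
theorem robust_minmax_monitor_sound
    {d0 dp dk : ℕ}
    (f : (Fin d0 → ℝ) → (Fin dp → ℝ))
    (h : (Fin dp → ℝ) → (Fin dk → ℝ))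
    (D : Finset (Fin d0 → ℝ)) (hD : D.Nonempty)
    (Δ : ℝ) (hΔ : 0 ≤ Δ)
    (l u : (Fin d0 → ℝ) → Fin dk → ℝ)
    (hpe : ∀ v ∈ D, ∀ δ : Fin dp → ℝ, (∀ i, |δ i| ≤ Δ) →
      ∀ j, l v j ≤ h (f v + δ) j ∧ h (f v + δ) j ≤ u v j)
    (v_op : Fin d0 → ℝ)
    (hwarn : ∃ j, h (f v_op) j < D.inf' hD (fun v => l v j) ∨
      D.sup' hD (fun v => u v j) < h (f v_op) j) :
    ¬ ∃ v ∈ D, ∀ i, |f v_op i - f v i| ≤ Δ := by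
  rintro ⟨v, hv, hclose⟩
  obtain ⟨j, hj⟩ := hwarn
  have key := hpe v hv (f v_op - f v) (fun i => by simpa using hclose i) j
  rw [show f v + (f v_op - f v) = f v_op by ring] at key
  rcases hj with hj | hj
  · exact absurd (le_trans (Finset.inf'_le (fun v => l v j) hv) key.1) (not_le.2 hj)
  · exact absurd (le_trans key.2 (Finset.le_sup' (fun v => u v j) hv)) (not_le.2 hj)
end

section
/- If the robust on-off monitor raises a warning on an input v_op (i.e., ab (h (f v_op)) ∉ M), then there does not exist a training input v ∈ D such that |f v_op i − f v i| ≤ Δ for every index i. -/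
/-- Soundness/robustness of the robust on-off monitor: a warning implies no
training input is Δ-close (at the perturbation layer) to the operational input. -/
theorem robust_onoff_monitor_sound
    {d0 dp dk : ℕ}
    (f : (Fin d0 → ℝ) → (Fin dp → ℝ))
    (h : (Fin dp → ℝ) → (Fin dk → ℝ))
    (D : Finset (Fin d0 → ℝ)) (hD : D.Nonempty)
    (Δ : ℝ) (hΔ : 0 ≤ Δ)
    (l u : (Fin d0 → ℝ) → Fin dk → ℝ)
    (hpe : ∀ v ∈ D, ∀ δ : Fin dp → ℝ, (∀ i, |δ i| ≤ Δ) →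
      ∀ j, l v j ≤ h (f v + δ) j ∧ h (f v + δ) j ≤ u v j)
    (c : Fin dk → ℝ)
    (v_op : Fin d0 → ℝ)
    (hwarn : (fun j => decide (c j < h (f v_op) j)) ∉
      {b : Fin dk → Bool | ∃ v ∈ D, ∀ j,
        (c j < l v j → b j = true) ∧ (u v j ≤ c j → b j = false)}) :
    ¬ ∃ v ∈ D, ∀ i, |f v_op i - f v i| ≤ Δ := by
  rintro ⟨v, hv, hclose⟩
  apply hwarn
  refine ⟨v, hv, fun j => ?_⟩
  have key := hpe v hv (fun i => f v_op i - f v i) hclose j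
  have hfe : f v + (fun i => f v_op i - f v i) = f v_op := by
    funext i; simp [Pi.add_apply]
  rw [hfe] at key
  constructor
  · intro hlt
    simp only [decide_eq_true_eq]
    exact lt_of_lt_of_le hlt key.1
  · intro hle
    simp only [decide_eq_false_iff_not, not_lt]
    exact key.2.trans hle
end

section
/- Let c1 < c2 < c3 be real numbers and l ≤ u. Define code : ℝ → Fin 4 by code x = 3 if x > c3, code x = 2 if c2 ≤ x ≤ c3, code x = 1 if c1 < x < c2, and code x = 0 if x ≤ c1. Define the set S ⊆ Fin 4 by the case table: S = {3} if l > c3; S = {2} if c3 ≥ u and l ≥ c2; S = {1} if c2 > u and l > c1; S = {0} if c1 ≥ u; S = {0, 1} if c2 > u > c1 and c1 ≥ l; S = {1, 2} if c3 ≥ u ≥ c2 and c2 > l > c1; S = {2, 3} if u > c3 and c3 ≥ l ≥ c2; S = {0, 1, 2} if c1 ≥ l and c3 ≥ u ≥ c2; S = {1, 2, 3} if u > c3 and c2 > l > c1; and S = {0, 1, 2, 3} otherwise. Then S equals the image of code over the closed interval [l, u], i.e., S = { code x | l ≤ x ≤ u }. -/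
/-- The 2-bit interval code of a real value with thresholds `c1 < c2 < c3`:
`3` if `x > c3`, `2` if `c2 ≤ x ≤ c3`, `1` if `c1 < x < c2`, `0` if `x ≤ c1`. -/
noncomputable def codeAt (c1 c2 c3 x : ℝ) : Fin 4 :=
  if c3 < x then 3 else if c2 ≤ x then 2 else if c1 < x then 1 else 0

lemma real3 (c1 c2 c3 l u : ℝ) (h12 : c1 < c2) (h23 : c2 < c3) (hlu : l ≤ u) :
    (∃ x : ℝ, l ≤ x ∧ x ≤ u ∧ (3 : Fin 4) = codeAt c1 c2 c3 x) ↔ c3 < u := by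
  constructor
  · rintro ⟨x, hl, hu, hc⟩
    unfold codeAt at hc
    split_ifs at hc <;> first | linarith | exact absurd hc (by decide)
  · intro h
    exact ⟨u, hlu, le_refl u, by unfold codeAt; rw [if_pos h]⟩

lemma real2 (c1 c2 c3 l u : ℝ) (h12 : c1 < c2) (h23 : c2 < c3) (hlu : l ≤ u) :
    (∃ x : ℝ, l ≤ x ∧ x ≤ u ∧ (2 : Fin 4) = codeAt c1 c2 c3 x) ↔ l ≤ c3 ∧ c2 ≤ u := by
  constructor
  · rintro ⟨x, hl, hu, hc⟩
    unfold codeAt at hc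
    split_ifs at hc <;> first | constructor <;> linarith | exact absurd hc (by decide)
  · rintro ⟨h1, h2⟩
    refine ⟨max l c2, le_max_left _ _, max_le hlu h2, ?_⟩
    unfold codeAt
    rw [if_neg (by simp [not_lt]; exact ⟨h1, le_of_lt h23⟩), if_pos (le_max_right _ _)]

lemma real1 (c1 c2 c3 l u : ℝ) (h12 : c1 < c2) (h23 : c2 < c3) (hlu : l ≤ u) :
    (∃ x : ℝ, l ≤ x ∧ x ≤ u ∧ (1 : Fin 4) = codeAt c1 c2 c3 x) ↔ l < c2 ∧ c1 < u := by
  constructor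
  · rintro ⟨x, hl, hu, hc⟩
    unfold codeAt at hc
    split_ifs at hc <;> first | constructor <;> linarith | exact absurd hc (by decide)
  · rintro ⟨h1, h2⟩
    have hla : l ≤ max l c1 := le_max_left _ _
    have hc1a : c1 ≤ max l c1 := le_max_right _ _
    have hbu : min u c2 ≤ u := min_le_left _ _
    have hbc2 : min u c2 ≤ c2 := min_le_right _ _
    have hc1b : c1 < min u c2 := lt_min h2 h12
    have hac2 : max l c1 < c2 := max_lt h1 h12
    have hab : max l c1 ≤ min u c2 := max_le (le_min hlu h1.le) (le_min h2.le h12.le)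
    refine ⟨(max l c1 + min u c2) / 2, by linarith, by linarith, ?_⟩
    unfold codeAt
    rw [if_neg (by linarith), if_neg (by linarith), if_pos (by linarith)]

lemma real0 (c1 c2 c3 l u : ℝ) (h12 : c1 < c2) (h23 : c2 < c3) (hlu : l ≤ u) :
    (∃ x : ℝ, l ≤ x ∧ x ≤ u ∧ (0 : Fin 4) = codeAt c1 c2 c3 x) ↔ l ≤ c1 := by
  constructor
  · rintro ⟨x, hl, hu, hc⟩
    unfold codeAt at hc
    split_ifs at hc <;> first | linarith | exact absurd hc (by decide)
  · intro h
    exact ⟨l, le_refl l, hlu, by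
      unfold codeAt
      rw [if_neg (by linarith), if_neg (by linarith), if_neg (by linarith)]⟩

lemma otherwise_bounds (c1 c2 c3 l u : ℝ)
    (h12 : c1 < c2) (h23 : c2 < c3) (hlu : l ≤ u)
    (h1 : l ≤ c3) (h2 : u ≤ c3 → l < c2) (h3 : u < c2 → l ≤ c1) (h4 : c1 < u)
    (h5 : u < c2 → c1 < u → c1 < l) (h6 : u ≤ c3 → c2 ≤ u → l < c2 → l ≤ c1)
    (h7 : c3 < u → l ≤ c3 → l < c2) (h8 : l ≤ c1 → u ≤ c3 → u < c2)
    (h9 : c3 < u → l < c2 → l ≤ c1) :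
    c3 < u ∧ l ≤ c1 := by
  have hu : c3 < u := by
    by_contra hc
    push_neg at hc
    have hl2 : l < c2 := h2 hc
    rcases le_or_gt c2 u with hc2u | hc2u
    · have hlc1 : l ≤ c1 := by
        by_contra hlc1
        push_neg at hlc1
        exact absurd (h6 hc hc2u hl2) (by linarith)
      linarith [h8 hlc1 hc]
    · have hlc1 : l ≤ c1 := h3 hc2u
      linarith [h5 hc2u h4]
  refine ⟨hu, ?_⟩
  by_contra hlc1
  push_neg at hlc1
  have hl2 : c2 ≤ l := by
    by_contra hc
    push_neg at hc
    exact absurd (h9 hu hc) (by linarith)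
  linarith [h7 hu h1]

set_option maxHeartbeats 1000000 in
/-- The robust interval abstraction of a neuron bounded in `[l, u]` is exactly the
set of 2-bit codes realizable by values in `[l, u]`. -/
theorem robust_interval_abstraction_exact (c1 c2 c3 l u : ℝ)
    (h12 : c1 < c2) (h23 : c2 < c3) (hlu : l ≤ u) :
    (if c3 < l then ({3} : Set (Fin 4))
     else if u ≤ c3 ∧ c2 ≤ l then {2}
     else if u < c2 ∧ c1 < l then {1}
     else if u ≤ c1 then {0}
     else if u < c2 ∧ c1 < u ∧ l ≤ c1 then {0, 1}
     else if u ≤ c3 ∧ c2 ≤ u ∧ l < c2 ∧ c1 < l then {1, 2}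
     else if c3 < u ∧ l ≤ c3 ∧ c2 ≤ l then {2, 3}
     else if l ≤ c1 ∧ u ≤ c3 ∧ c2 ≤ u then {0, 1, 2}
     else if c3 < u ∧ l < c2 ∧ c1 < l then {1, 2, 3}
     else {0, 1, 2, 3}) =
    {b : Fin 4 | ∃ x : ℝ, l ≤ x ∧ x ≤ u ∧ b = codeAt c1 c2 c3 x} := by
  ext b
  have hb : b = 0 ∨ b = 1 ∨ b = 2 ∨ b = 3 := by omega
  rcases hb with rfl | rfl | rfl | rfl
  all_goals simp only [Set.mem_setOf_eq, real0 c1 c2 c3 l u h12 h23 hlu,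
      real1 c1 c2 c3 l u h12 h23 hlu, real2 c1 c2 c3 l u h12 h23 hlu,
      real3 c1 c2 c3 l u h12 h23 hlu]
  all_goals split_ifs with h1 h2 h3 h4 h5 h6 h7 h8 h9
  all_goals simp only [Set.mem_insert_iff, Set.mem_singleton_iff]
  all_goals try simp
  all_goals try push_neg at *
  all_goals try casesm* _ ∧ _
  all_goals try (first | linarith | (constructor <;> linarith) | (intro; linarith) | (intro _ _; linarith))
  all_goals {
    obtain ⟨hA, hB⟩ := otherwise_bounds c1 c2 c3 l u h12 h23 hlu h1 h2 h3 h4 h5 h6 h7 h8 h9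
    first | linarith | constructor <;> linarith }
end

section
/- Every warning of the robust on-off monitor is a warning of the standard on-off monitor: the standard monitor's stored set M⁰ = { ab (h (f v)) | v ∈ D } is contained in the robust monitor's stored set M, hence for any input v_op, if ab (h (f v_op)) ∉ M then ab (h (f v_op)) ∉ M⁰. -/
/-- Every warning of the robust on-off monitor is a warning of the standard on-off
monitor: the standard stored set is contained in the robust stored set. -/
theorem robust_onoff_warning_implies_standard_warning
    {d0 dp dk : ℕ}
    (f : (Fin d0 → ℝ) → (Fin dp → ℝ))
    (h : (Fin dp → ℝ) → (Fin dk → ℝ))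
    (D : Finset (Fin d0 → ℝ)) (hD : D.Nonempty)
    (Δ : ℝ) (hΔ : 0 ≤ Δ)
    (l u : (Fin d0 → ℝ) → Fin dk → ℝ)
    (hpe : ∀ v ∈ D, ∀ δ : Fin dp → ℝ, (∀ i, |δ i| ≤ Δ) →
      ∀ j, l v j ≤ h (f v + δ) j ∧ h (f v + δ) j ≤ u v j)
    (c : Fin dk → ℝ) :
    {w : Fin dk → Bool | ∃ v ∈ D, w = fun j => decide (c j < h (f v) j)} ⊆
      {b : Fin dk → Bool | ∃ v ∈ D, ∀ j,
        (c j < l v j → b j = true) ∧ (u v j ≤ c j → b j = false)} ∧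
    (∀ v_op : Fin d0 → ℝ,
      (fun j => decide (c j < h (f v_op) j)) ∉
        {b : Fin dk → Bool | ∃ v ∈ D, ∀ j,
          (c j < l v j → b j = true) ∧ (u v j ≤ c j → b j = false)} →
      (fun j => decide (c j < h (f v_op) j)) ∉
        {w : Fin dk → Bool | ∃ v ∈ D, w = fun j => decide (c j < h (f v) j)}) := by
  have sub : {w : Fin dk → Bool | ∃ v ∈ D, w = fun j => decide (c j < h (f v) j)} ⊆
      {b : Fin dk → Bool | ∃ v ∈ D, ∀ j,
        (c j < l v j → b j = true) ∧ (u v j ≤ c j → b j = false)} := by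
    rintro w ⟨v, hv, rfl⟩
    refine ⟨v, hv, fun j => ?_⟩
    have h0 := hpe v hv 0 (fun i => by simpa using hΔ) j
    rw [add_zero] at h0
    constructor
    · intro hl
      simp only [decide_eq_true_iff]
      exact lt_of_lt_of_le hl h0.1
    · intro hu
      simp only [decide_eq_false_iff_not, not_lt]
      exact h0.2.trans hu
  exact ⟨sub, fun v_op hn hm => hn (sub hm)⟩
end

section
/- The standard interval activation monitor generalizes the min-max monitor: suppose for every index j the thresholds are chosen as c3 j = U⁰ j (the maximum of h (f v) j over v ∈ D), c2 j = L⁰ j (the minimum of h (f v) j over v ∈ D), and c1 j is any real with c1 j < L⁰ j (and c2 j < c3 j, i.e., L⁰ j < U⁰ j). Then for every input v_op, the standard interval monitor raises a warning on v_op if and only if the standard min-max monitor raises a warning on v_op, i.e., iff there exists j with h (f v_op) j < L⁰ j or h (f v_op) j > U⁰ j. -/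
lemma codeAt_eq_two (c1 c2 c3 x : ℝ) (h2 : c2 ≤ x) (h3 : x ≤ c3) :
    codeAt c1 c2 c3 x = 2 := by
  simp [codeAt, not_lt.2 h3, h2]

lemma codeAt_ne_two (c1 c2 c3 x : ℝ) (hx : x < c2 ∨ c3 < x) :
    codeAt c1 c2 c3 x ≠ 2 := by
  unfold codeAt
  split_ifs with h1 h2
  · decide
  · rcases hx with hx | hx
    · exact absurd h2 (not_le.2 hx)
    · exact absurd hx h1
  · decide
  · decide

/-- The standard interval activation monitor generalizes the min-max monitor: with
`c3 = U⁰`, `c2 = L⁰` and any `c1 < L⁰`, it warns exactly when the min-max monitor warns. -/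
theorem interval_monitor_generalizes_minmax
    {d0 dp dk : ℕ}
    (f : (Fin d0 → ℝ) → (Fin dp → ℝ))
    (h : (Fin dp → ℝ) → (Fin dk → ℝ))
    (D : Finset (Fin d0 → ℝ)) (hD : D.Nonempty)
    (c1 c2 c3 : Fin dk → ℝ)
    (hc3 : ∀ j, c3 j = D.sup' hD (fun v => h (f v) j))
    (hc2 : ∀ j, c2 j = D.inf' hD (fun v => h (f v) j))
    (hc1 : ∀ j, c1 j < D.inf' hD (fun v => h (f v) j))
    (hlt : ∀ j, D.inf' hD (fun v => h (f v) j) < D.sup' hD (fun v => h (f v) j))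
    (v_op : Fin d0 → ℝ) :
    ((fun j => codeAt (c1 j) (c2 j) (c3 j) (h (f v_op) j)) ∉
      {w : Fin dk → Fin 4 | ∃ v ∈ D,
        w = fun j => codeAt (c1 j) (c2 j) (c3 j) (h (f v) j)}) ↔
    (∃ j, h (f v_op) j < D.inf' hD (fun v => h (f v) j) ∨
      D.sup' hD (fun v => h (f v) j) < h (f v_op) j) := by
  have key : ∀ v ∈ D, ∀ j, codeAt (c1 j) (c2 j) (c3 j) (h (f v) j) = 2 := by
    intro v hv j
    exact codeAt_eq_two _ _ _ _ (by rw [hc2]; exact Finset.inf'_le _ hv)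
      (by rw [hc3]; exact Finset.le_sup' (fun v => h (f v) j) hv)
  constructor
  · intro hmem
    by_contra hno
    push_neg at hno
    obtain ⟨v0, hv0⟩ := hD
    exact hmem ⟨v0, hv0, funext fun j => by
      rw [key v0 hv0 j]
      exact codeAt_eq_two _ _ _ _ (by rw [hc2]; exact (hno j).1)
        (by rw [hc3]; exact (hno j).2)⟩
  · rintro ⟨j, hj⟩ ⟨v, hv, heq⟩
    have := congrFun heq j
    rw [key v hv j] at this
    exact codeAt_ne_two _ _ _ _ (by rw [← hc2, ← hc3] at hj; exact hj) this
end
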